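/- Let (X, μ, T) be an ergodic probability measure-preserving system with μ atomless, X̂ ⊆ X measurable with μ(X̂) > 0, y ∈ Int(X̂), and suppose limsup_{r→0} τ̂_{B(y,r)}(x) · μ̂(B(y,r)) = +∞ for μ̂-a.e. x ∈ X̂, where τ̂ and μ̂ are the entry time and invariant measure of the first return system on X̂. Then limsup_{r→0} τ_{B(y,r)}(x) · μ(B(y,r)) = +∞ for μ-a.e. x ∈ X. -/

import Mathlib

open MeasureTheory Metric Filter Set
open scoped ENNReal Topology

/-- First entry time into `U` under `T` (valued in `ℝ≥0∞`, `⊤` if the orbit never enters `U`). -/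
noncomputable def entryTime {X : Type*} (T : X → X) (U : Set X) (x : X) : ℝ≥0∞ :=
  sInf ((fun n : ℕ => (n : ℝ≥0∞)) '' {n : ℕ | 1 ≤ n ∧ T^[n] x ∈ U})

/-- First return time of `x` to `S` under `T` (`0` if the orbit never returns). -/
noncomputable def retTime {X : Type*} (T : X → X) (S : Set X) (x : X) : ℕ :=
  sInf {n : ℕ | 1 ≤ n ∧ T^[n] x ∈ S}

/-- The first return map of `T` to `S`. -/
noncomputable def retMap {X : Type*} (T : X → X) (S : Set X) (x : X) : X :=
  T^[retTime T S x] x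

lemma entryTime_le' {X : Type*} {T : X → X} {U : Set X} {x : X} {n : ℕ}
    (h1 : 1 ≤ n) (h2 : T^[n] x ∈ U) : entryTime T U x ≤ n :=
  sInf_le ⟨n, ⟨h1, h2⟩, rfl⟩

lemma le_entryTime' {X : Type*} {T : X → X} {U : Set X} {x : X} {c : ℝ≥0∞}
    (h : ∀ n : ℕ, 1 ≤ n → T^[n] x ∈ U → c ≤ n) : c ≤ entryTime T U x :=
  le_sInf (by rintro b ⟨n, ⟨h1, h2⟩, rfl⟩; exact h n h1 h2)

lemma retMap_iterate_exists {X : Type*} (T : X → X) (S : Set X) :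
    ∀ n : ℕ, ∀ x : X, x ∈ S → 1 ≤ n → T^[n] x ∈ S →
      ∃ k, 1 ≤ k ∧ k ≤ n ∧ (retMap T S)^[k] x = T^[n] x := by
  intro n
  induction n using Nat.strong_induction_on with
  | _ n ih =>
    intro x hx hn hnx
    have hne : {m : ℕ | 1 ≤ m ∧ T^[m] x ∈ S}.Nonempty := ⟨n, hn, hnx⟩
    have hmem := Nat.sInf_mem hne
    set m := retTime T S x with hm
    have hm1 : 1 ≤ m := hmem.1
    have hmS : T^[m] x ∈ S := hmem.2
    have hmn : m ≤ n := Nat.sInf_le ⟨hn, hnx⟩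
    have hret : retMap T S x = T^[m] x := rfl
    rcases eq_or_lt_of_le hmn with h | h
    · exact ⟨1, le_refl 1, hn, by simp [hret, h]⟩
    · have h1 : 1 ≤ n - m := by omega
      have h2 : T^[n - m] (T^[m] x) ∈ S := by
        rw [← Function.iterate_add_apply, show n - m + m = n by omega]; exact hnx
      obtain ⟨k, hk1, hk2, hk3⟩ := ih (n - m) (by omega) (T^[m] x) hmS h1 h2
      refine ⟨k + 1, by omega, by omega, ?_⟩
      rw [Function.iterate_succ_apply, hret, hk3,
        ← Function.iterate_add_apply, show n - m + m = n by omega]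

lemma entryTime_retMap_le {X : Type*} {T : X → X} {S U : Set X} {x : X}
    (hx : x ∈ S) (hU : U ⊆ S) :
    entryTime (retMap T S) U x ≤ entryTime T U x := by
  refine le_entryTime' ?_
  intro n h1 h2
  obtain ⟨k, hk1, hk2, hk3⟩ := retMap_iterate_exists T S n x hx h1 (hU h2)
  calc entryTime (retMap T S) U x ≤ (k : ℝ≥0∞) := entryTime_le' hk1 (hk3 ▸ h2)
    _ ≤ (n : ℝ≥0∞) := by exact_mod_cast hk2

lemma entryTime_shift {X : Type*} {T : X → X} {U : Set X} {x : X} {n : ℕ}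
    (h : ∀ k, 1 ≤ k → k ≤ n → T^[k] x ∉ U) :
    entryTime T U (T^[n] x) ≤ entryTime T U x := by
  refine le_entryTime' ?_
  intro m h1 h2
  have hmn : n < m := by
    by_contra hc
    exact h m h1 (le_of_not_gt hc) h2
  calc entryTime T U (T^[n] x) ≤ ((m - n : ℕ) : ℝ≥0∞) := by
        refine entryTime_le' (by omega) ?_
        rw [← Function.iterate_add_apply, show m - n + n = m by omega]; exact h2
    _ ≤ (m : ℝ≥0∞) := by exact_mod_cast Nat.sub_le m n

theorem limsup_entry_top_of_induced {X : Type*} [MetricSpace X]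
    [MeasurableSpace X] [BorelSpace X]
    (μ : Measure X) [IsProbabilityMeasure μ] (T : X → X)
    (hT : MeasurePreserving T μ μ) (hE : Ergodic T μ)
    (hatomless : ∀ z : X, μ {z} = 0)
    (Xhat : Set X) (hXm : MeasurableSet Xhat) (hpos : 0 < μ Xhat)
    (y : X) (hy : y ∈ interior Xhat)
    (hhat : ∀ᵐ x ∂((μ Xhat)⁻¹ • μ.restrict Xhat),
      Filter.limsup
          (fun r : ℝ => entryTime (retMap T Xhat) (ball y r) x *
            ((μ Xhat)⁻¹ • μ.restrict Xhat) (ball y r)) (𝓝[>] 0) = ⊤) :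
    ∀ᵐ x ∂μ,
      Filter.limsup (fun r : ℝ => entryTime T (ball y r) x * μ (ball y r)) (𝓝[>] 0) = ⊤ := by
  set c : ℝ≥0∞ := μ Xhat with hc
  have hc0 : c ≠ 0 := hpos.ne'
  have hcT : c ≠ ⊤ := (measure_lt_top μ Xhat).ne
  have hcinv0 : c⁻¹ ≠ 0 := ENNReal.inv_ne_zero.2 hcT
  have hcinvT : c⁻¹ ≠ ⊤ := ENNReal.inv_ne_top.2 hc0
  -- ball around y inside Xhat
  obtain ⟨r₀, hr₀pos, hball⟩ : ∃ r₀ > 0, ball y r₀ ⊆ Xhat := by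
    obtain ⟨r₀, hr₀pos, h⟩ := Metric.mem_nhds_iff.1 (mem_interior_iff_mem_nhds.1 hy)
    exact ⟨r₀, hr₀pos, h⟩
  -- rewrite hhat as a.e. statement for μ.restrict Xhat
  have hhat' : ∀ᵐ x ∂(μ.restrict Xhat),
      Filter.limsup
          (fun r : ℝ => entryTime (retMap T Xhat) (ball y r) x *
            ((μ Xhat)⁻¹ • μ.restrict Xhat) (ball y r)) (𝓝[>] 0) = ⊤ :=
    ae_iff.2 (by
      have h := ae_iff.1 hhat
      rw [Measure.smul_apply, smul_eq_mul, mul_eq_zero] at h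
      exact h.resolve_left hcinv0)
  -- Step A: a.e. x in Xhat satisfies the conclusion
  have stepA : ∀ᵐ x ∂(μ.restrict Xhat),
      Filter.limsup (fun r : ℝ => entryTime T (ball y r) x * μ (ball y r)) (𝓝[>] 0) = ⊤ := by
    filter_upwards [hhat', ae_restrict_mem hXm] with x hx hxS
    have hev : ∀ᶠ r : ℝ in 𝓝[>] 0,
        entryTime (retMap T Xhat) (ball y r) x * ((μ Xhat)⁻¹ • μ.restrict Xhat) (ball y r)
          ≤ c⁻¹ * (entryTime T (ball y r) x * μ (ball y r)) := by
      filter_upwards [eventually_nhdsWithin_of_eventually_nhds (gt_mem_nhds hr₀pos)]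
        with r hr
      have hsub : ball y r ⊆ Xhat := fun z hz => hball (mem_ball.2 ((mem_ball.1 hz).trans hr))
      have hμ : ((μ Xhat)⁻¹ • μ.restrict Xhat) (ball y r) = c⁻¹ * μ (ball y r) := by
        rw [Measure.smul_apply, smul_eq_mul, Measure.restrict_apply measurableSet_ball,
          inter_eq_self_of_subset_left hsub]
      rw [hμ, mul_left_comm]
      exact mul_le_mul_right (mul_le_mul_left (entryTime_retMap_le hxS hsub) _) _
    have hle := Filter.limsup_le_limsup hev
    rw [hx] at hle
    have := ENNReal.limsup_const_mul_of_ne_top (f := 𝓝[>] (0:ℝ))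
      (u := fun r : ℝ => entryTime T (ball y r) x * μ (ball y r)) (a := c⁻¹) hcinvT
    rw [this] at hle
    have htop : c⁻¹ * Filter.limsup
        (fun r : ℝ => entryTime T (ball y r) x * μ (ball y r)) (𝓝[>] 0) = ⊤ :=
      top_le_iff.1 hle
    rcases ENNReal.mul_eq_top.1 htop with ⟨_, h2⟩ | ⟨h1, _⟩
    · exact h2
    · exact absurd h1 hcinvT
  -- extract a measurable good set B ⊆ Xhat of positive measure
  set P : X → Prop := fun x =>
    Filter.limsup (fun r : ℝ => entryTime T (ball y r) x * μ (ball y r)) (𝓝[>] 0) = ⊤ with hP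
  set N : Set X := toMeasurable (μ.restrict Xhat) {x | ¬ P x} with hN
  have hNm : MeasurableSet N := measurableSet_toMeasurable _ _
  have hN0 : μ.restrict Xhat N = 0 := by
    rw [measure_toMeasurable]
    exact stepA
  set B : Set X := Xhat \ N with hB
  have hBm : MeasurableSet B := hXm.diff hNm
  have hBpos : 0 < μ B := by
    have h1 : μ (N ∩ Xhat) = 0 := by
      rw [← Measure.restrict_apply hNm]; exact hN0
    have h2 : Xhat \ N = Xhat \ (N ∩ Xhat) := by
      ext z; simp only [mem_diff, mem_inter_iff]; tauto
    rw [hB, h2, measure_diff_null h1]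
    exact hpos
  have hBP : ∀ x ∈ B, x ∈ Xhat ∧ P x := by
    intro x hxB
    exact ⟨hxB.1, not_not.1 fun h => hxB.2 (subset_toMeasurable _ _ h)⟩
  -- a.e. x eventually enters B
  have hTm : Measurable T := hT.measurable
  set A : Set X := ⋃ n : ℕ, T^[n] ⁻¹' B with hA
  have hAm : MeasurableSet A := MeasurableSet.iUnion fun n => (hTm.iterate n) hBm
  have hpre : T ⁻¹' A ⊆ A := by
    intro z hz
    simp only [hA, mem_preimage, mem_iUnion] at hz ⊢
    obtain ⟨n, hn⟩ := hz
    exact ⟨n + 1, by rwa [Function.iterate_succ_apply]⟩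
  have hAuniv : ∀ᵐ x ∂μ, x ∈ A := by
    rcases hE.ae_empty_or_univ_of_preimage_ae_le hAm.nullMeasurableSet
        (HasSubset.Subset.eventuallyLE hpre) with h | h
    · exfalso
      have : μ A = 0 := by
        rw [measure_congr h]; simp
      have hBA : B ⊆ A := by
        intro z hz
        simp only [hA, mem_iUnion]
        exact ⟨0, by simpa using hz⟩
      exact absurd (le_trans (measure_mono hBA) this.le) (not_le.2 hBpos)
    · rw [Filter.eventually_iff, mem_ae_iff]
      simpa using ae_eq_univ.1 h
  -- a.e. the orbit never hits y
  have hmiss : ∀ᵐ x ∂μ, ∀ k : ℕ, T^[k] x ≠ y := by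
    rw [MeasureTheory.ae_all_iff]
    intro k
    have : μ (T^[k] ⁻¹' {y}) = 0 := by
      rw [(hT.iterate k).measure_preimage (measurableSet_singleton y).nullMeasurableSet]
      exact hatomless y
    rw [ae_iff]
    have heq : {a | ¬ T^[k] a ≠ y} = T^[k] ⁻¹' {y} := by ext a; simp
    rw [heq]
    exact this
  -- conclude
  filter_upwards [hAuniv, hmiss] with x hxA hxmiss
  simp only [hA, mem_iUnion, mem_preimage] at hxA
  obtain ⟨n, hn⟩ := hxA
  obtain ⟨hzS, hzP⟩ := hBP _ hn
  -- a positive lower bound for distances of the first n orbit points to y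
  obtain ⟨δ, hδpos, hδ⟩ : ∃ δ > 0, ∀ k, 1 ≤ k → k ≤ n → δ ≤ dist (T^[k] x) y := by
    rcases (Finset.Icc 1 n).eq_empty_or_nonempty with h | h
    · exact ⟨1, one_pos, fun k h1 h2 => absurd (Finset.mem_Icc.2 ⟨h1, h2⟩) (h ▸ Finset.notMem_empty k)⟩
    · obtain ⟨b, hb, hbmin⟩ := Finset.exists_min_image (Finset.Icc 1 n)
        (fun k => dist (T^[k] x) y) h
      refine ⟨dist (T^[b] x) y, dist_pos.2 (hxmiss b), fun k h1 h2 => hbmin k (Finset.mem_Icc.2 ⟨h1, h2⟩)⟩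
  have hev : ∀ᶠ r : ℝ in 𝓝[>] 0,
      entryTime T (ball y r) (T^[n] x) * μ (ball y r)
        ≤ entryTime T (ball y r) x * μ (ball y r) := by
    filter_upwards [eventually_nhdsWithin_of_eventually_nhds (gt_mem_nhds hδpos)] with r hr
    refine mul_le_mul_left (entryTime_shift fun k h1 h2 hk => ?_) _
    have hd := hδ k h1 h2
    rw [mem_ball] at hk
    linarith
  have := Filter.limsup_le_limsup hev
  rw [hzP] at this
  exact top_le_iff.1 this
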